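/- Let S : C(X,ℂ) → C(Y,ℂ) be a surjective real-linear isometry with S(1) = 1 (for X, Y compact Hausdorff). Then there exist a homeomorphism τ : Y → X and a clopen set K ⊆ Y such that S(f)(y) = f(τ(y)) for y ∈ K and S(f)(y) = conj(f(τ(y))) for y ∈ Y \ K, for all f ∈ C(X,ℂ). -/

import Mathlib

set_option linter.unusedSectionVars false
set_option maxHeartbeats 1000000

open ContinuousMap Complex

section helpers
variable {Z : Type*} [TopologicalSpace Z]

noncomputable def CMofR (g : C(Z,ℝ)) : C(Z,ℂ) :=
  ⟨fun z => (g z : ℂ), Complex.continuous_ofReal.comp g.continuous⟩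

noncomputable def CMre (f : C(Z,ℂ)) : C(Z,ℝ) := ⟨fun z => (f z).re, Complex.continuous_re.comp f.continuous⟩
noncomputable def CMim (f : C(Z,ℂ)) : C(Z,ℝ) := ⟨fun z => (f z).im, Complex.continuous_im.comp f.continuous⟩

@[simp] lemma CMofR_apply (g : C(Z,ℝ)) (z : Z) : CMofR g z = (g z : ℂ) := rfl
@[simp] lemma CMre_apply (f : C(Z,ℂ)) (z : Z) : CMre f z = (f z).re := rfl
@[simp] lemma CMim_apply (f : C(Z,ℂ)) (z : Z) : CMim f z = (f z).im := rfl

lemma normsq (z : ℂ) : ‖z‖^2 = z.re^2 + z.im^2 := by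
  rw [Complex.sq_norm, Complex.normSq_apply]; ring

lemma lin_le_const {a C : ℝ} (h : ∀ t : ℝ, t * a ≤ C) : a = 0 := by
  by_contra ha
  have := h ((C+1)/a)
  rw [div_mul_cancel₀ _ ha] at this
  linarith

variable [CompactSpace Z]

lemma sq_apply_le_norm (w : C(Z,ℂ)) (x : Z) : ‖w x‖^2 ≤ ‖w‖^2 :=
  pow_le_pow_left₀ (norm_nonneg _) (w.norm_coe_le_norm x) 2

lemma norm_sq_le (w : C(Z,ℂ)) {M : ℝ} (hM : 0 ≤ M) (h : ∀ x, ‖w x‖^2 ≤ M) : ‖w‖^2 ≤ M := by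
  have h1 : ‖w‖ ≤ Real.sqrt M := by
    rw [ContinuousMap.norm_le _ (Real.sqrt_nonneg M)]
    intro x
    calc ‖w x‖ = Real.sqrt (‖w x‖^2) := (Real.sqrt_sq (norm_nonneg _)).symm
    _ ≤ Real.sqrt M := Real.sqrt_le_sqrt (h x)
  calc ‖w‖^2 ≤ (Real.sqrt M)^2 := pow_le_pow_left₀ (norm_nonneg _) h1 2
  _ = M := Real.sq_sqrt hM

lemma norm_CMofR (g : C(Z,ℝ)) : ‖CMofR g‖ = ‖g‖ := by
  apply le_antisymm
  · rw [ContinuousMap.norm_le _ (norm_nonneg g)]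
    intro x; simpa using g.norm_coe_le_norm x
  · rw [ContinuousMap.norm_le _ (norm_nonneg _)]
    intro x
    have : ‖g x‖ = ‖CMofR g x‖ := by simp
    rw [this]; exact (CMofR g).norm_coe_le_norm x

lemma norm_eq_of_ptwise {f : C(Z,ℝ)} {w : C(Z,ℂ)} (h : ∀ z, |f z| = ‖w z‖) : ‖f‖ = ‖w‖ := by
  apply le_antisymm
  · rw [ContinuousMap.norm_le _ (norm_nonneg w)]
    intro z
    rw [Real.norm_eq_abs, h z]
    exact w.norm_coe_le_norm z
  · rw [ContinuousMap.norm_le _ (norm_nonneg f)]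
    intro z
    rw [← h z, ← Real.norm_eq_abs]
    exact f.norm_coe_le_norm z

lemma norm_CMim_eq {w : C(Z,ℂ)} (h : ∀ z, (w z).re = 0) : ‖CMim w‖ = ‖w‖ := by
  apply norm_eq_of_ptwise
  intro z
  simp only [CMim_apply]
  rw [show ‖w z‖ = Real.sqrt (‖w z‖^2) from (Real.sqrt_sq (norm_nonneg _)).symm,
     normsq, h z]
  simp [Real.sqrt_sq_eq_abs]

lemma norm_I_smul_CMofR (g : C(Z,ℝ)) : ‖Complex.I • CMofR g‖ = ‖g‖ := by
  symm
  apply norm_eq_of_ptwise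
  intro z
  simp [map_mul]

variable [T2Space Z]

lemma bump {U : Set Z} (hU : IsOpen U) {z0 : Z} (hz : z0 ∈ U) :
    ∃ φ : C(Z,ℝ), φ z0 = 1 ∧ (∀ z, z ∉ U → φ z = 0) ∧ ∀ z, φ z ∈ Set.Icc (0:ℝ) 1 := by
  obtain ⟨φ, h0, h1, hicc⟩ := exists_continuous_zero_one_of_isClosed
    (hU.isClosed_compl) (isClosed_singleton (x := z0))
    (Set.disjoint_singleton_right.mpr (by simpa using hz))
  exact ⟨φ, h1 rfl, fun z hz => h0 hz, hicc⟩

lemma sep_points {z1 z2 : Z} (h : z1 ≠ z2) : ∃ f : C(Z,ℝ), f z1 ≠ f z2 := by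
  obtain ⟨φ, h1, h0, _⟩ := bump (isOpen_compl_singleton (x := z2)) (by simpa using h)
  exact ⟨φ, by simp [h1, h0 z2 (by simp)]⟩

end helpers

section main
variable {X Y : Type*} [TopologicalSpace X] [CompactSpace X] [T2Space X]
  [TopologicalSpace Y] [CompactSpace Y] [T2Space Y]

lemma abs_one_of_isometry (T' : C(X,ℝ) → C(Y,ℝ)) (hadd : ∀ f g, T' (f+g) = T' f + T' g)
    (hsmul : ∀ (c : ℝ) f, T' (c • f) = c • T' f)
    (hiso : ∀ f, ‖T' f‖ = ‖f‖) (hsurj : Function.Surjective T') :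
    ∀ y, |T' 1 y| = 1 := by
  intro y0
  have hzero : T' 0 = 0 := by
    have := hadd 0 0; simp only [add_zero] at this; exact (left_eq_add.mp this)
  have hXne : Nonempty X := by
    by_contra hX
    rw [not_nonempty_iff] at hX
    have hall : ∀ g : C(X,ℝ), g = 0 := by
      intro g; ext x; exact (hX.false x).elim
    obtain ⟨g, hg⟩ := hsurj 1
    rw [hall g, hzero] at hg
    have := congrArg (fun k => k y0) hg
    simp at this
  haveI := hXne
  set e := T' 1 with he
  have hne : ‖e‖ = 1 := by rw [he, hiso]; exact norm_one
  have hle : ∀ y, |e y| ≤ 1 := by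
    intro y
    rw [← Real.norm_eq_abs, ← hne]
    exact e.norm_coe_le_norm y
  by_contra hy
  have hlt : |e y0| < 1 := lt_of_le_of_ne (hle y0) hy
  set m : ℝ := (1 + |e y0|)/2 with hm
  have hm1 : m < 1 := by rw [hm]; linarith
  have hm0 : |e y0| < m := by rw [hm]; linarith
  have hmpos : 0 ≤ m := by positivity
  set U : Set Y := {y | |e y| < m} with hU
  have hUopen : IsOpen U := isOpen_lt (continuous_abs.comp e.continuous) continuous_const
  obtain ⟨φ, hφ0, hφz, hφicc⟩ := bump hUopen (show y0 ∈ U from hm0)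
  set ε : ℝ := (1 - m)/2 with hε
  have hεpos : 0 < ε := by rw [hε]; linarith
  obtain ⟨h, hh⟩ := hsurj (ε • φ)
  have hb : ∀ (s : ℝ), s = 1 ∨ s = -1 → ‖e + s • (ε • φ)‖ ≤ 1 := by
    intro s hs
    rw [ContinuousMap.norm_le _ (by norm_num)]
    intro y
    rw [Real.norm_eq_abs]
    by_cases hyU : y ∈ U
    · have h1 : |e y| < m := hyU
      have h2 : |s • (ε • φ) y| ≤ ε := by
        have hic := hφicc y
        simp only [Set.mem_Icc] at hic
        have habs : |s| = 1 := by rcases hs with hs | hs <;> rw [hs] <;> norm_num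
        simp only [ContinuousMap.smul_apply, smul_eq_mul]
        rw [abs_mul, abs_mul, habs, one_mul, _root_.abs_of_nonneg (le_of_lt hεpos),
          _root_.abs_of_nonneg hic.1]
        nlinarith
      calc |(e + s • (ε • φ)) y| ≤ |e y| + |s • (ε • φ) y| := by
            simp only [ContinuousMap.add_apply]; exact abs_add_le _ _
      _ ≤ m + ε := by linarith
      _ ≤ 1 := by rw [hε]; linarith
    · have h2 : φ y = 0 := hφz y hyU
      have : (e + s • (ε • φ)) y = e y := by
        simp [h2]
      rw [this]; exact hle y
  have key : ∀ (s : ℝ), s = 1 ∨ s = -1 → ‖(1 : C(X,ℝ)) + s • h‖ ≤ 1 := by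
    intro s hs
    have : T' (1 + s • h) = e + s • (ε • φ) := by
      rw [hadd, hsmul, hh, he]
    rw [← hiso, this]
    exact hb s hs
  have hh0 : ∀ x, h x = 0 := by
    intro x
    have h1 : |1 + h x| ≤ 1 := by
      have := key 1 (Or.inl rfl)
      simp only [one_smul] at this
      have h2 := ((1 : C(X,ℝ)) + (1:ℝ) • h).norm_coe_le_norm x
      simp only [one_smul] at h2
      rw [Real.norm_eq_abs] at h2
      simp only [ContinuousMap.add_apply, ContinuousMap.smul_apply, one_smul,
        ContinuousMap.one_apply] at h2
      linarith
    have h2 : |1 - h x| ≤ 1 := by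
      have hk := key (-1) (Or.inr rfl)
      have h2 := ((1 : C(X,ℝ)) + (-1:ℝ) • h).norm_coe_le_norm x
      rw [Real.norm_eq_abs] at h2
      simp only [ContinuousMap.add_apply, ContinuousMap.smul_apply, smul_eq_mul,
        ContinuousMap.one_apply, neg_one_mul] at h2
      have he2 : (1:ℝ) + -(h x) = 1 - h x := by ring
      rw [he2] at h2
      linarith
    have h3 := abs_le.mp h1
    have h4 := abs_le.mp h2
    linarith
  have : h = 0 := by ext x; simp [hh0 x]
  rw [this, hzero] at hh
  have h5 := congrArg (fun k => k y0) hh.symm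
  simp only [ContinuousMap.smul_apply, smul_eq_mul, ContinuousMap.zero_apply, hφ0, mul_one] at h5
  exact absurd h5 (ne_of_gt hεpos)

end main

section good
variable {X Y : Type*} [TopologicalSpace X] [CompactSpace X] [T2Space X]
  [TopologicalSpace Y] [CompactSpace Y] [T2Space Y]

structure Good (T : C(X,ℂ) → C(Y,ℂ)) : Prop where
  surj : Function.Surjective T
  add : ∀ f g, T (f+g) = T f + T g
  smul : ∀ (c:ℝ) f, T (c • f) = c • T f
  iso : ∀ f, ‖T f‖ = ‖f‖
  one : T 1 = 1

set_option linter.unusedSectionVars false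
namespace Good
variable {T : C(X,ℂ) → C(Y,ℂ)} (hT : Good T)
include hT

lemma map_zero : T 0 = 0 := by
  have := hT.add 0 0
  simp only [add_zero] at this
  exact (left_eq_add.mp this)

lemma map_neg (f : C(X,ℂ)) : T (-f) = - T f := by
  have := hT.smul (-1) f
  simpa using this

lemma map_sub (f g : C(X,ℂ)) : T (f - g) = T f - T g := by
  have h := hT.add (f - g) g
  simp only [sub_add_cancel] at h
  rw [h]; abel

lemma inj : Function.Injective T := by
  intro f g h
  have : ‖f - g‖ = 0 := by rw [← hT.iso, hT.map_sub, h, sub_self, norm_zero]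
  exact sub_eq_zero.mp (norm_eq_zero.mp this)

end Good
end good

section good2
variable {X Y : Type*} [TopologicalSpace X] [CompactSpace X] [T2Space X]
  [TopologicalSpace Y] [CompactSpace Y] [T2Space Y]
set_option linter.unusedSectionVars false

namespace Good
variable {T : C(X,ℂ) → C(Y,ℂ)} (hT : Good T)
include hT

noncomputable def V (_ : Good T) : C(Y,ℂ) → C(X,ℂ) := Function.invFun T

lemma TV (k : C(Y,ℂ)) : T (hT.V k) = k := Function.rightInverse_invFun hT.surj k

lemma VT (f : C(X,ℂ)) : hT.V (T f) = f := Function.leftInverse_invFun hT.inj f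

lemma goodV : Good (hT.V) := by
  constructor
  · intro f; exact ⟨T f, hT.VT f⟩
  · intro f g
    apply hT.inj
    rw [hT.TV, hT.add, hT.TV, hT.TV]
  · intro c f
    apply hT.inj
    rw [hT.TV, hT.smul, hT.TV]
  · intro f
    conv_rhs => rw [← hT.TV f]
    rw [hT.iso]
  · apply hT.inj
    rw [hT.TV, hT.one]

/-- purely imaginary functions are preserved -/
lemma imag_pres (f : C(X,ℂ)) (hf : ∀ x, (f x).re = 0) : ∀ y, (T f y).re = 0 := by
  intro y
  have key : ∀ t : ℝ, ‖T f y + t‖^2 ≤ ‖f‖^2 + t^2 := by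
    intro t
    have e1 : T (f + t • 1) = T f + t • 1 := by rw [hT.add, hT.smul, hT.one]
    have e2 : ‖f + t • 1‖^2 ≤ ‖f‖^2 + t^2 := by
      apply norm_sq_le _ (by positivity)
      intro x
      have : (f + t • 1) x = f x + (t:ℂ) := by
        simp [Complex.real_smul]
      rw [this, normsq]
      have h2 : (f x).im ^2 ≤ ‖f‖^2 := by
        calc (f x).im ^2 = ‖f x‖^2 := by rw [normsq, hf x]; ring
        _ ≤ ‖f‖^2 := sq_apply_le_norm f x
      simp [hf x]
      linarith
    calc ‖T f y + t‖^2 = ‖(T f + t • 1) y‖^2 := by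
          congr 1
          simp [Complex.real_smul]
    _ ≤ ‖T f + t • 1‖^2 := sq_apply_le_norm _ y
    _ = ‖T (f + t • 1)‖^2 := by rw [e1]
    _ = ‖f + t • 1‖^2 := by rw [hT.iso]
    _ ≤ ‖f‖^2 + t^2 := e2
  have : ∀ t : ℝ, t * (2 * (T f y).re) ≤ ‖f‖^2 - ‖T f y‖^2 := by
    intro t
    have := key t
    rw [normsq] at this
    simp only [Complex.add_re, Complex.add_im, Complex.ofReal_re, Complex.ofReal_im] at this
    have hn : ‖T f y‖^2 = (T f y).re^2 + (T f y).im^2 := normsq _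
    nlinarith [this]
  have := lin_le_const this
  linarith

end Good
end good2
section main2
variable {X Y : Type*} [TopologicalSpace X] [CompactSpace X] [T2Space X]
  [TopologicalSpace Y] [CompactSpace Y] [T2Space Y]

namespace Good
variable {T : C(X,ℂ) → C(Y,ℂ)} (hT : Good T)

noncomputable def Q (_ : Good T) (g : C(X,ℝ)) : C(Y,ℝ) := CMim (T (Complex.I • CMofR g))

include hT

lemma Q_spec (g : C(X,ℝ)) : T (Complex.I • CMofR g) = Complex.I • CMofR (hT.Q g) := by
  ext y
  have hre := hT.imag_pres (Complex.I • CMofR g) (fun x => by simp [smul_eq_mul]) y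
  apply Complex.ext
  · simpa [smul_eq_mul] using hre
  · simp [Q, smul_eq_mul]

lemma Q_add (g h : C(X,ℝ)) : hT.Q (g + h) = hT.Q g + hT.Q h := by
  have h1 : Complex.I • CMofR (g + h) = Complex.I • CMofR g + Complex.I • CMofR h := by
    ext x; simp [smul_eq_mul]; ring
  unfold Q
  rw [h1, hT.add]
  ext y; simp

lemma Q_smul (c : ℝ) (g : C(X,ℝ)) : hT.Q (c • g) = c • hT.Q g := by
  have h1 : Complex.I • CMofR (c • g) = c • (Complex.I • CMofR g) := by
    ext x
    simp [smul_eq_mul, Complex.real_smul]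
    ring
  unfold Q
  rw [h1, hT.smul]
  ext y; simp

lemma Q_iso (g : C(X,ℝ)) : ‖hT.Q g‖ = ‖g‖ := by
  unfold Q
  rw [norm_CMim_eq (fun y => hT.imag_pres _ (fun x => by simp [smul_eq_mul]) y), hT.iso,
    norm_I_smul_CMofR]

lemma Q_surj : Function.Surjective hT.Q := by
  intro q
  set w := hT.V (Complex.I • CMofR q) with hw
  have him : ∀ x, (w x).re = 0 := hT.goodV.imag_pres _ (fun y => by simp [smul_eq_mul])
  refine ⟨CMim w, ?_⟩
  have hwe : Complex.I • CMofR (CMim w) = w := by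
    ext x
    apply Complex.ext <;> simp [smul_eq_mul, him x]
  unfold Q
  rw [hwe, hw, hT.TV]
  ext y; simp [smul_eq_mul]

noncomputable def bmap (hT : Good T) : C(Y,ℝ) := hT.Q 1

lemma babs (y : Y) : |hT.bmap y| = 1 :=
  abs_one_of_isometry hT.Q hT.Q_add hT.Q_smul hT.Q_iso hT.Q_surj y

lemma bsq (y : Y) : hT.bmap y ^ 2 = 1 := by
  rw [← _root_.sq_abs, hT.babs y, one_pow]

lemma T_I_one : T (Complex.I • 1) = Complex.I • CMofR hT.bmap := by
  have h1 : (Complex.I • (1:C(X,ℂ))) = Complex.I • CMofR 1 := by ext x; simp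
  rw [h1]; exact hT.Q_spec 1

lemma real_pres (f : C(X,ℂ)) (hf : ∀ x, (f x).im = 0) : ∀ y, (T f y).im = 0 := by
  intro y
  set β := hT.bmap y with hβ
  have hβ2 : β^2 = 1 := hT.bsq y
  have key : ∀ t : ℝ, ‖T f y + (t:ℂ) * Complex.I * (β:ℂ)‖^2 ≤ ‖f‖^2 + t^2 := by
    intro t
    have e1 : T (f + t • (Complex.I • 1)) = T f + t • (Complex.I • CMofR hT.bmap) := by
      rw [hT.add, hT.smul, hT.T_I_one]
    have e2 : ‖f + t • (Complex.I • 1)‖^2 ≤ ‖f‖^2 + t^2 := by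
      apply norm_sq_le _ (by positivity)
      intro x
      have hx : (f + t • (Complex.I • 1)) x = f x + (t:ℂ) * Complex.I := by
        simp [Complex.real_smul, smul_eq_mul]
      rw [hx, normsq]
      simp only [Complex.add_re, Complex.add_im, Complex.mul_re, Complex.mul_im,
        Complex.I_re, Complex.I_im, Complex.ofReal_re, Complex.ofReal_im, hf x]
      have : (f x).re^2 ≤ ‖f‖^2 := by
        have := sq_apply_le_norm f x
        rw [normsq, hf x] at this
        nlinarith [this]
      nlinarith [this]
    have e3 : (T f + t • (Complex.I • CMofR hT.bmap)) y
        = T f y + (t:ℂ) * Complex.I * (β:ℂ) := by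
      simp [Complex.real_smul, smul_eq_mul, hβ]
      ring
    calc ‖T f y + (t:ℂ)*Complex.I*(β:ℂ)‖^2
        = ‖(T f + t • (Complex.I • CMofR hT.bmap)) y‖^2 := by rw [e3]
    _ ≤ ‖T f + t • (Complex.I • CMofR hT.bmap)‖^2 := sq_apply_le_norm _ y
    _ = ‖T (f + t • (Complex.I • 1))‖^2 := by rw [e1]
    _ = ‖f + t • (Complex.I • 1)‖^2 := by rw [hT.iso]
    _ ≤ ‖f‖^2 + t^2 := e2
  have hlin : ∀ t : ℝ, t * (2 * (β * (T f y).im)) ≤ ‖f‖^2 - ‖T f y‖^2 := by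
    intro t
    have hk := key t
    rw [normsq] at hk
    simp only [Complex.add_re, Complex.add_im, Complex.mul_re, Complex.mul_im,
      Complex.I_re, Complex.I_im, Complex.ofReal_re, Complex.ofReal_im] at hk
    have hn : ‖T f y‖^2 = (T f y).re^2 + (T f y).im^2 := normsq _
    nlinarith [hk, hβ2]
  have h0 := lin_le_const hlin
  have hβne : β ≠ 0 := by
    intro h; rw [h] at hβ2; norm_num at hβ2
  have : β * (T f y).im = 0 := by linarith [h0]
  rcases mul_eq_zero.mp this with h | h
  · exact absurd h hβne
  · exact h

noncomputable def R (_ : Good T) (g : C(X,ℝ)) : C(Y,ℝ) := CMre (T (CMofR g))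

lemma R_spec (g : C(X,ℝ)) : T (CMofR g) = CMofR (hT.R g) := by
  ext y
  have him := hT.real_pres (CMofR g) (fun x => by simp) y
  apply Complex.ext
  · simp [R]
  · simp [him]

lemma R_add (g h : C(X,ℝ)) : hT.R (g+h) = hT.R g + hT.R h := by
  have h1 : CMofR (g+h) = CMofR g + CMofR h := by ext x; simp
  unfold R
  rw [h1, hT.add]; ext y; simp

lemma R_smul (c : ℝ) (g : C(X,ℝ)) : hT.R (c • g) = c • hT.R g := by
  have h1 : CMofR (c • g) = c • CMofR g := by
    ext x; simp [Complex.real_smul]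
  unfold R
  rw [h1, hT.smul]; ext y; simp [Complex.real_smul]

lemma R_iso (g : C(X,ℝ)) : ‖hT.R g‖ = ‖g‖ := by
  have h1 : ‖CMofR (hT.R g)‖ = ‖CMofR g‖ := by rw [← hT.R_spec, hT.iso]
  rwa [norm_CMofR, norm_CMofR] at h1

lemma R_one : hT.R 1 = 1 := by
  have h1 : CMofR (1 : C(X,ℝ)) = 1 := by ext x; simp
  unfold R
  rw [h1, hT.one]; ext y; simp

lemma R_sub (g h : C(X,ℝ)) : hT.R (g - h) = hT.R g - hT.R h := by
  have h1 := hT.R_add (g - h) h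
  simp only [sub_add_cancel] at h1
  rw [h1]; abel

lemma RV_R (g : C(X,ℝ)) : hT.goodV.R (hT.R g) = g := by
  have h1 : hT.V (CMofR (hT.R g)) = CMofR g := by rw [← hT.R_spec, hT.VT]
  show CMre (hT.V (CMofR (hT.R g))) = g
  rw [h1]; ext x; simp

lemma R_VR (k : C(Y,ℝ)) : hT.R (hT.goodV.R k) = k := by
  have him : ∀ x, (hT.V (CMofR k) x).im = 0 := hT.goodV.real_pres _ (fun y => by simp)
  have h1 : CMofR (hT.goodV.R k) = hT.V (CMofR k) := by
    ext x
    apply Complex.ext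
    · simp [R]
    · simp [him x]
  show CMre (T (CMofR (hT.goodV.R k))) = k
  rw [h1, hT.TV]
  ext y; simp

lemma R_surj : Function.Surjective hT.R := fun k => ⟨hT.goodV.R k, hT.R_VR k⟩

lemma R_pos (g : C(X,ℝ)) (hg : ∀ x, 0 ≤ g x) : ∀ y, 0 ≤ hT.R g y := by
  intro y
  set N := ‖g‖ with hN
  have h1 : hT.R g - N • 1 = hT.R (g - N • 1) := by
    rw [hT.R_sub, hT.R_smul, hT.R_one]
  have h3 : ‖g - N•(1:C(X,ℝ))‖ ≤ N := by
    rw [ContinuousMap.norm_le _ (norm_nonneg g)]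
    intro x
    rw [Real.norm_eq_abs]
    have hx1 : g x ≤ N := by
      have := g.norm_coe_le_norm x
      rw [Real.norm_eq_abs] at this
      exact le_trans (le_abs_self _) this
    simp only [ContinuousMap.sub_apply, ContinuousMap.smul_apply, ContinuousMap.one_apply,
      smul_eq_mul, mul_one]
    rw [abs_le]
    constructor <;> [linarith [hg x]; linarith [hg x]]
  have h4 : |hT.R g y - N| ≤ ‖g - N•(1:C(X,ℝ))‖ := by
    calc |hT.R g y - N| = ‖(hT.R g - N•(1:C(Y,ℝ))) y‖ := by
          rw [Real.norm_eq_abs]; simp [smul_eq_mul]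
    _ ≤ ‖hT.R g - N•(1:C(Y,ℝ))‖ := (hT.R g - N•(1:C(Y,ℝ))).norm_coe_le_norm y
    _ = ‖hT.R (g - N•(1:C(X,ℝ)))‖ := by rw [h1]
    _ = ‖g - N•(1:C(X,ℝ))‖ := hT.R_iso _
  have h5 : |hT.R g y - N| ≤ N := le_trans h4 h3
  rw [abs_le] at h5
  linarith [h5.1]

end Good
end main2
section mult
variable {X Y : Type*} [TopologicalSpace X] [CompactSpace X] [T2Space X]
  [TopologicalSpace Y] [CompactSpace Y] [T2Space Y]

lemma mult_lemma (R' : C(X,ℝ) → C(Y,ℝ)) (R'' : C(Y,ℝ) → C(X,ℝ))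
    (hadd : ∀ f g, R' (f+g) = R' f + R' g)
    (hsmul : ∀ (c:ℝ) f, R' (c•f) = c • R' f)
    (hadd'' : ∀ f g, R'' (f+g) = R'' f + R'' g)
    (hsmul'' : ∀ (c:ℝ) f, R'' (c•f) = c • R'' f)
    (hone : R' 1 = 1) (hone'' : R'' 1 = 1)
    (hpos : ∀ g, (∀ x, 0 ≤ g x) → ∀ y, 0 ≤ R' g y)
    (hpos'' : ∀ k, (∀ y, 0 ≤ k y) → ∀ x, 0 ≤ R'' k x)
    (hinv : ∀ k, R' (R'' k) = k) (hinv'' : ∀ g, R'' (R' g) = g) :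
    ∀ (f g : C(X,ℝ)) (y : Y), R' (f * g) y = R' f y * R' g y := by
  intro f g y
  set φ : C(X,ℝ) → ℝ := fun g => R' g y with hφ
  have φadd : ∀ a b, φ (a + b) = φ a + φ b := by
    intro a b; simp only [hφ, hadd]; simp
  have φsmul : ∀ (c:ℝ) a, φ (c • a) = c * φ a := by
    intro c a; simp only [hφ, hsmul]; simp
  have φsub : ∀ a b, φ (a - b) = φ a - φ b := by
    intro a b
    have : a - b + b = a := by abel
    have h2 := φadd (a - b) b
    rw [this] at h2; linarith
  have φ1 : φ 1 = 1 := by simp only [hφ, hone]; simp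
  have φpos : ∀ a, (∀ x, 0 ≤ a x) → 0 ≤ φ a := fun a ha => hpos a ha y
  show φ (f * g) = φ f * φ g
  have φmono : ∀ a b, (∀ x, a x ≤ b x) → φ a ≤ φ b := by
    intro a b hab
    have h1 : 0 ≤ φ (b - a) := φpos _ (fun x => by simp [hab x])
    rw [φsub] at h1; linarith
  -- main: for 0 ≤ g ≤ 1
  have main : ∀ g : C(X,ℝ), (∀ x, 0 ≤ g x) → (∀ x, g x ≤ 1) →
      ∀ f, φ (f * g) = φ f * φ g := by
    intro g hg0 hg1
    have caseA : ∀ g : C(X,ℝ), (∀ x, 0 ≤ g x) → (∀ x, g x ≤ 1) → φ g = 0 →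
        ∀ f, φ (f * g) = 0 := by
      intro g hg0 hg1 hφg f
      set N := ‖f‖ with hN
      have hfN : ∀ x, |f x| ≤ N := by
        intro x
        have := f.norm_coe_le_norm x
        rwa [Real.norm_eq_abs] at this
      have h1 : φ ((f + N•1) * g) = 0 := by
        have hub : ∀ x, ((f + N•1) * g) x ≤ ((2*N)•g) x := by
          intro x
          simp only [ContinuousMap.mul_apply, ContinuousMap.add_apply,
            ContinuousMap.smul_apply, ContinuousMap.one_apply, smul_eq_mul, mul_one]
          have := abs_le.mp (hfN x)
          nlinarith [hg0 x]
        have hlb : 0 ≤ φ ((f + N•1) * g) := by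
          apply φpos
          intro x
          simp only [ContinuousMap.mul_apply, ContinuousMap.add_apply,
            ContinuousMap.smul_apply, ContinuousMap.one_apply, smul_eq_mul, mul_one]
          have := abs_le.mp (hfN x)
          nlinarith [hg0 x]
        have hub2 : φ ((f + N•1) * g) ≤ φ ((2*N)•g) := φmono _ _ hub
        rw [φsmul, hφg, mul_zero] at hub2
        linarith
      have h2 : (f + N•1) * g = f * g + N • g := by
        ext x; simp [mul_comm]; ring
      rw [h2, φadd, φsmul, hφg, mul_zero, add_zero] at h1
      exact h1
    set t := φ g with ht
    have ht0 : 0 ≤ t := φpos g hg0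
    have ht1 : t ≤ 1 := by
      have := φmono g 1 (fun x => by simpa using hg1 x)
      rwa [φ1] at this
    rcases eq_or_lt_of_le ht0 with h0 | h0
    · intro f
      rw [← h0, mul_zero]
      exact caseA g hg0 hg1 (by rw [← ht]; exact h0.symm) f
    rcases eq_or_lt_of_le ht1 with h1 | h1
    · -- t = 1
      intro f
      have hg0' : ∀ x, 0 ≤ (1 - g) x := fun x => by simp [hg1 x]
      have hg1' : ∀ x, (1 - g) x ≤ 1 := fun x => by simp [hg0 x]
      have hφg' : φ (1 - g) = 0 := by
        rw [φsub, φ1, ← ht, h1, sub_self]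
      have := caseA (1 - g) hg0' hg1' hφg' f
      have hexp : f * (1 - g) = f - f * g := by
        ext x
        simp only [ContinuousMap.mul_apply, ContinuousMap.sub_apply, ContinuousMap.one_apply]
        ring
      rw [hexp, φsub] at this
      rw [h1, mul_one]
      linarith
    · -- 0 < t < 1
      intro f
      set ψ : C(Y,ℝ) → ℝ := fun k => φ (R'' k * g) / t with hψ
      have ψadd : ∀ a b, ψ (a + b) = ψ a + ψ b := by
        intro a b
        simp only [hψ]
        rw [hadd'', add_mul, φadd]
        ring
      have ψsmul : ∀ (c:ℝ) a, ψ (c • a) = c * ψ a := by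
        intro c a
        simp only [hψ]
        rw [hsmul'']
        have : (c • R'' a) * g = c • (R'' a * g) := by
          ext x
          simp only [ContinuousMap.smul_apply, ContinuousMap.mul_apply, smul_eq_mul]
          ring
        rw [this, φsmul]
        ring
      have ψsub : ∀ a b, ψ (a - b) = ψ a - ψ b := by
        intro a b
        have h2 := ψadd (a - b) b
        rw [show a - b + b = a by abel] at h2; linarith
      have ψ1 : ψ 1 = 1 := by
        simp only [hψ]
        rw [hone'', one_mul, ← ht]
        field_simp
      have ψpos : ∀ k, (∀ y', 0 ≤ k y') → 0 ≤ ψ k := by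
        intro k hk
        simp only [hψ]
        apply div_nonneg _ (le_of_lt h0)
        apply φpos
        intro x
        simp only [ContinuousMap.mul_apply]
        exact mul_nonneg (hpos'' k hk x) (hg0 x)
      have hdec : ∀ k : C(Y,ℝ), k y = t * ψ k + φ (R'' k * (1 - g)) := by
        intro k
        have e1 : t * ψ k = φ (R'' k * g) := by
          simp only [hψ]; field_simp
        have e2 : R'' k * g + R'' k * (1 - g) = R'' k := by ext x; simp; ring
        have e3 : φ (R'' k * g) + φ (R'' k * (1 - g)) = φ (R'' k) := by
          rw [← φadd, e2]
        have e4 : φ (R'' k) = k y := by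
          simp only [hφ]; rw [hinv]
        rw [e1]; linarith
      have stepi : ∀ k : C(Y,ℝ), (∀ y', 0 ≤ k y') → k y = 0 → ψ k = 0 := by
        intro k hk hky
        have h2 := hdec k
        rw [hky] at h2
        have h3 : 0 ≤ φ (R'' k * (1 - g)) := by
          apply φpos
          intro x
          simp only [ContinuousMap.mul_apply, ContinuousMap.sub_apply, ContinuousMap.one_apply]
          exact mul_nonneg (hpos'' k hk x) (by linarith [hg1 x])
        have h4 : 0 ≤ ψ k := ψpos k hk
        nlinarith
      have cauchy : ∀ l : C(Y,ℝ), (ψ l)^2 ≤ ψ (l * l) := by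
        intro l
        have key : ∀ s : ℝ, 0 ≤ ψ (l*l) - 2*s*(ψ l) + s^2 := by
          intro s
          have e1 : (l - s•1) * (l - s•1) = l*l - (2*s)•l + (s^2)•1 := by
            ext x; simp; ring
          have h2 : 0 ≤ ψ ((l - s•1)*(l - s•1)) := by
            apply ψpos
            intro y'
            simp only [ContinuousMap.mul_apply]
            exact mul_self_nonneg _
          rw [e1] at h2
          rw [ψadd, ψsub, ψsmul, ψsmul, ψ1] at h2
          nlinarith
        have := key (ψ l)
        nlinarith
      have stepii : ∀ k : C(Y,ℝ), ψ k = k y := by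
        intro k
        set l := k - (k y)•1 with hl
        have hm0 : ∀ y', 0 ≤ (l * l) y' := by
          intro y'; simp only [ContinuousMap.mul_apply]; exact mul_self_nonneg _
        have hmy : (l * l) y = 0 := by
          simp only [hl, ContinuousMap.mul_apply, ContinuousMap.sub_apply,
            ContinuousMap.smul_apply, ContinuousMap.one_apply, smul_eq_mul, mul_one,
            sub_self, mul_zero]
        have hψm : ψ (l * l) = 0 := stepi _ hm0 hmy
        have hcs := cauchy l
        rw [hψm] at hcs
        have hl0 : ψ l = 0 := by nlinarith [sq_nonneg (ψ l)]
        rw [hl, ψsub, ψsmul, ψ1] at hl0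
        linarith
      have := stepii (R' f)
      simp only [hψ] at this
      have hfin : φ (R'' (R' f) * g) = φ (f * g) := by rw [hinv'']
      rw [hfin] at this
      have h9 : φ (f * g) = t * (R' f y) := by
        field_simp at this
        linarith [this]
      rw [h9]
      simp only [hφ]
      ring
  -- reduce general g to 0 ≤ g ≤ 1
  set N := ‖g‖ with hN
  rcases eq_or_lt_of_le (norm_nonneg g) with hN0 | hN0
  · have : g = 0 := norm_eq_zero.mp hN0.symm
    rw [this, mul_zero]
    have : φ (0 : C(X,ℝ)) = 0 := by
      have := φsmul 0 0; simpa using this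
    simp only [hφ] at this ⊢
    rw [this, mul_zero]
  · set g₀ : C(X,ℝ) := (2*N)⁻¹ • (g + N•1) with hg₀
    have hgN : ∀ x, |g x| ≤ N := by
      intro x
      have := g.norm_coe_le_norm x
      rwa [Real.norm_eq_abs] at this
    have h00 : ∀ x, 0 ≤ g₀ x := by
      intro x
      simp only [hg₀, ContinuousMap.smul_apply, ContinuousMap.add_apply,
        ContinuousMap.one_apply, smul_eq_mul, mul_one]
      have := abs_le.mp (hgN x)
      have h2N : 0 < 2*N := by linarith
      apply mul_nonneg (le_of_lt (inv_pos.mpr h2N))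
      linarith
    have h01 : ∀ x, g₀ x ≤ 1 := by
      intro x
      simp only [hg₀, ContinuousMap.smul_apply, ContinuousMap.add_apply,
        ContinuousMap.one_apply, smul_eq_mul, mul_one]
      have := abs_le.mp (hgN x)
      have h2N : 0 < 2*N := by linarith
      rw [inv_mul_le_iff₀ h2N]
      linarith
    have hgrep : g = (2*N)•g₀ - N•1 := by
      ext x
      simp only [hg₀, ContinuousMap.sub_apply, ContinuousMap.smul_apply,
        ContinuousMap.add_apply, ContinuousMap.one_apply, smul_eq_mul, mul_one]
      field_simp
      rw [add_sub_cancel_right, mul_div_cancel_left₀ (g x) (show N ≠ 0 from ne_of_gt hN0)]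
    have hmul := main g₀ h00 h01 f
    have e1 : f * g = (2*N)•(f*g₀) - N•f := by
      rw [hgrep]; ext x; simp; ring
    rw [e1, φsub, φsmul, φsmul, hmul]
    have e2 : φ g = 2*N * φ g₀ - N := by
      have h5 : φ (N • (1:C(X,ℝ))) = N := by rw [φsmul, φ1, mul_one]
      rw [hgrep, φsub, φsmul, h5]
    rw [e2]
    ring
end mult
section charpt
variable {X : Type*} [TopologicalSpace X] [CompactSpace X] [T2Space X]

lemma char_point (φ : C(X,ℝ) → ℝ)
    (hadd : ∀ a b, φ (a+b) = φ a + φ b)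
    (hsmul : ∀ (c:ℝ) a, φ (c•a) = c * φ a)
    (hone : φ 1 = 1)
    (hpos : ∀ a, (∀ x, 0 ≤ a x) → 0 ≤ φ a)
    (hmul : ∀ a b, φ (a*b) = φ a * φ b) :
    ∃ x : X, ∀ a, φ a = a x := by
  classical
  have hzero : φ 0 = 0 := by
    have := hsmul 0 0; simpa using this
  have hsub : ∀ a b, φ (a - b) = φ a - φ b := by
    intro a b
    have h2 := hadd (a - b) b
    rw [show a - b + b = a by abel] at h2; linarith
  have hXne : Nonempty X := by
    by_contra hX
    rw [not_nonempty_iff] at hX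
    have h01 : (1 : C(X,ℝ)) = 0 := by ext x; exact (hX.false x).elim
    rw [h01, hzero] at hone
    norm_num at hone
  by_contra hcon
  push_neg at hcon
  have hint : (Set.univ : Set X) ∩ ⋂ a : C(X,ℝ), {x | a x = φ a} = ∅ := by
    rw [Set.eq_empty_iff_forall_notMem]
    intro x hx
    obtain ⟨a, ha⟩ := hcon x
    have := Set.mem_iInter.mp hx.2 a
    exact ha this.symm
  obtain ⟨u, hu⟩ := isCompact_univ.elim_finite_subfamily_closed
    (fun a : C(X,ℝ) => {x | a x = φ a})
    (fun a => isClosed_eq a.continuous continuous_const) hint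
  set G : C(X,ℝ) := ∑ a ∈ u, (a - φ a • 1) * (a - φ a • 1) with hG
  have hGapp : ∀ x, G x = ∑ a ∈ u, (a x - φ a) * (a x - φ a) := by
    intro x
    rw [hG]
    have hgen : ∀ (v : Finset C(X,ℝ)),
        (∑ a ∈ v, (a - φ a • 1) * (a - φ a • 1)) x = ∑ a ∈ v, (a x - φ a) * (a x - φ a) := by
      intro v
      induction v using Finset.induction_on with
      | empty => simp
      | insert _ _ hni ih =>
        rw [Finset.sum_insert hni, Finset.sum_insert hni, ContinuousMap.add_apply, ih]
        simp
    exact hgen u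
  have hφG : φ G = 0 := by
    rw [hG]
    have hterm : ∀ a : C(X,ℝ), φ ((a - φ a • 1) * (a - φ a • 1)) = 0 := by
      intro a
      rw [hmul, hsub, hsmul, hone]
      ring
    have hsum : ∀ (v : Finset C(X,ℝ)), φ (∑ a ∈ v, (a - φ a • 1) * (a - φ a • 1)) = 0 := by
      intro v
      induction v using Finset.induction_on with
      | empty => simpa using hzero
      | insert _ _ hni ih =>
        rw [Finset.sum_insert hni, hadd, hterm, ih, add_zero]
    exact hsum u
  have hGpos : ∀ x, 0 < G x := by
    intro x
    have hxnot : x ∉ ⋂ a ∈ u, {x | a x = φ a} := by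
      intro hx
      have : x ∈ (Set.univ : Set X) ∩ ⋂ a ∈ u, {x | a x = φ a} := ⟨trivial, hx⟩
      rw [hu] at this
      exact this
    rw [Set.mem_iInter₂] at hxnot
    push_neg at hxnot
    obtain ⟨a0, ha0u, ha0⟩ := hxnot
    rw [hGapp]
    apply Finset.sum_pos' (fun a _ => mul_self_nonneg _)
    refine ⟨a0, ha0u, ?_⟩
    have hne : a0 x - φ a0 ≠ 0 := fun h => ha0 (by simp [sub_eq_zero.mp h])
    exact mul_self_pos.mpr hne
  obtain ⟨x0, -, hx0⟩ := isCompact_univ.exists_isMinOn Set.univ_nonempty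
    (G.continuous.continuousOn)
  set δ := G x0 with hδ
  have hδpos : 0 < δ := hGpos x0
  have hge : ∀ x, δ ≤ G x := by
    intro x
    exact hx0 (Set.mem_univ x)
  have h9 : 0 ≤ φ (G - δ • 1) := by
    apply hpos
    intro x
    simp only [ContinuousMap.sub_apply, ContinuousMap.smul_apply, ContinuousMap.one_apply,
      smul_eq_mul, mul_one]
    linarith [hge x]
  rw [hsub, hsmul, hone, hφG] at h9
  linarith
end charpt
section tau
variable {X Y : Type*} [TopologicalSpace X] [CompactSpace X] [T2Space X]
  [TopologicalSpace Y] [CompactSpace Y] [T2Space Y]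

namespace Good
variable {T : C(X,ℂ) → C(Y,ℂ)} (hT : Good T)
include hT

lemma R_mult : ∀ (f g : C(X,ℝ)) (y : Y), hT.R (f * g) y = hT.R f y * hT.R g y :=
  mult_lemma hT.R hT.goodV.R hT.R_add hT.R_smul hT.goodV.R_add hT.goodV.R_smul
    hT.R_one hT.goodV.R_one hT.R_pos hT.goodV.R_pos hT.R_VR hT.RV_R

lemma exists_pt (y : Y) : ∃ x : X, ∀ g : C(X,ℝ), hT.R g y = g x := by
  apply char_point (fun g => hT.R g y)
  · intro a b; rw [hT.R_add]; simp
  · intro c a; rw [hT.R_smul]; simp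
  · rw [hT.R_one]; simp
  · intro a ha; exact hT.R_pos a ha y
  · intro a b; exact hT.R_mult a b y

noncomputable def tau (hT : Good T) : Y → X := fun y => Classical.choose (hT.exists_pt y)

lemma tau_spec (g : C(X,ℝ)) (y : Y) : hT.R g y = g (hT.tau y) :=
  Classical.choose_spec (hT.exists_pt y) g

lemma tau_cont : Continuous (hT.tau) := by
  rw [continuous_iff_continuousAt]
  intro y0
  rw [continuousAt_def]
  intro A hA
  obtain ⟨W, hWA, hWopen, hWmem⟩ := mem_nhds_iff.mp hA
  obtain ⟨φ, hφ1, hφ0, _⟩ := bump hWopen hWmem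
  set N : Set Y := {y | 0 < hT.R φ y} with hN
  have hNopen : IsOpen N := isOpen_lt continuous_const (hT.R φ).continuous
  have hy0N : y0 ∈ N := by
    simp only [hN, Set.mem_setOf_eq, hT.tau_spec φ y0, hφ1]
    norm_num
  have hsub : N ⊆ hT.tau ⁻¹' A := by
    intro y hy
    simp only [hN, Set.mem_setOf_eq, hT.tau_spec φ y] at hy
    apply hWA
    by_contra hnW
    rw [hφ0 _ hnW] at hy
    exact lt_irrefl 0 hy
  exact Filter.mem_of_superset (hNopen.mem_nhds hy0N) hsub

lemma tau_left_inv (x : X) : hT.tau (hT.goodV.tau x) = x := by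
  by_contra hne
  obtain ⟨g, hg⟩ := sep_points hne
  apply hg
  calc g (hT.tau (hT.goodV.tau x)) = hT.R g (hT.goodV.tau x) := (hT.tau_spec g _).symm
  _ = hT.goodV.R (hT.R g) x := (hT.goodV.tau_spec (hT.R g) x).symm
  _ = g x := by rw [hT.RV_R]

lemma tau_right_inv (y : Y) : hT.goodV.tau (hT.tau y) = y := by
  by_contra hne
  obtain ⟨k, hk⟩ := sep_points hne
  apply hk
  calc k (hT.goodV.tau (hT.tau y)) = hT.goodV.R k (hT.tau y) := (hT.goodV.tau_spec k _).symm
  _ = hT.R (hT.goodV.R k) y := (hT.tau_spec (hT.goodV.R k) y).symm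
  _ = k y := by rw [hT.R_VR]

noncomputable def tauHomeo (hT : Good T) : Y ≃ₜ X where
  toFun := hT.tau
  invFun := hT.goodV.tau
  left_inv := hT.tau_right_inv
  right_inv := hT.tau_left_inv
  continuous_toFun := hT.tau_cont
  continuous_invFun := hT.goodV.tau_cont

lemma Q_abs_le (g : C(X,ℝ)) (y : Y) : |hT.Q g y| ≤ |g (hT.tau y)| := by
  have key : ∀ ε : ℝ, 0 < ε → (hT.Q g y)^2 ≤ (g (hT.tau y))^2 + ε := by
    intro ε hε
    set x0 := hT.tau y with hx0
    set M : ℝ := ‖g‖ + 1 with hM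
    have hMpos : 0 < M := by positivity
    have hgM : ∀ x, |g x| ≤ ‖g‖ := by
      intro x
      have := g.norm_coe_le_norm x
      rwa [Real.norm_eq_abs] at this
    set U : Set X := {x | g x^2 < g x0^2 + ε} with hU
    have hUopen : IsOpen U := isOpen_lt (by continuity) continuous_const
    have hx0U : x0 ∈ U := by simp only [hU, Set.mem_setOf_eq]; linarith
    obtain ⟨φ, hφ1, hφ0, hφicc⟩ := bump hUopen hx0U
    set f : C(X,ℝ) := M • φ with hf
    set w : C(X,ℂ) := CMofR f + Complex.I • CMofR g with hw
    have hwnorm : ‖w‖^2 ≤ M^2 + (g x0^2 + ε) := by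
      apply norm_sq_le _ (by positivity)
      intro x
      have hwx : w x = (f x : ℂ) + Complex.I * (g x : ℂ) := by simp [hw, smul_eq_mul]
      have hre : (w x).re = f x := by rw [hwx]; simp
      have him : (w x).im = g x := by rw [hwx]; simp
      rw [normsq, hre, him]
      by_cases hxU : x ∈ U
      · have h1 : g x^2 < g x0^2 + ε := hxU
        have h2 : f x^2 ≤ M^2 := by
          simp only [hf, ContinuousMap.smul_apply, smul_eq_mul]
          have hic := hφicc x
          simp only [Set.mem_Icc] at hic
          have hφ2 : φ x^2 ≤ 1 := by nlinarith [hic.1, hic.2]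
          calc (M * φ x)^2 = M^2 * φ x^2 := by ring
          _ ≤ M^2 * 1 := by nlinarith [sq_nonneg M, hφ2]
          _ = M^2 := by ring
        linarith
      · have h1 : f x = 0 := by simp [hf, hφ0 x hxU]
        have h2 : g x^2 ≤ M^2 := by
          have := hgM x
          nlinarith [abs_nonneg (g x), norm_nonneg g, _root_.sq_abs (g x)]
        rw [h1]
        nlinarith
    have hTw : T w = CMofR (hT.R f) + Complex.I • CMofR (hT.Q g) := by
      rw [hw, hT.add, hT.R_spec, hT.Q_spec]
    have hval : ‖T w y‖^2 = M^2 + (hT.Q g y)^2 := by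
      have h1 : T w y = ((hT.R f y : ℝ) : ℂ) + Complex.I * ((hT.Q g y : ℝ) : ℂ) := by
        rw [hTw]; simp [smul_eq_mul]
      have hre : (T w y).re = hT.R f y := by rw [h1]; simp
      have him : (T w y).im = hT.Q g y := by rw [h1]; simp
      rw [normsq, hre, him]
      have hfM : hT.R f y = M := by
        rw [hT.tau_spec f y, ← hx0]
        simp [hf, hφ1]
      rw [hfM]
    have hchain : M^2 + (hT.Q g y)^2 ≤ M^2 + (g x0^2 + ε) :=
      calc M^2 + (hT.Q g y)^2 = ‖T w y‖^2 := hval.symm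
      _ ≤ ‖T w‖^2 := sq_apply_le_norm _ y
      _ = ‖w‖^2 := by rw [hT.iso]
      _ ≤ M^2 + (g x0^2 + ε) := hwnorm
    linarith
  have hsq : (hT.Q g y)^2 ≤ (g (hT.tau y))^2 :=
    le_of_forall_pos_le_add key
  nlinarith [_root_.sq_abs (hT.Q g y), _root_.sq_abs (g (hT.tau y)), abs_nonneg (hT.Q g y),
    abs_nonneg (g (hT.tau y)), hsq]

lemma Q_one_eq : hT.Q 1 = hT.bmap := rfl

lemma Q_eq (g : C(X,ℝ)) (y : Y) : hT.Q g y = hT.bmap y * g (hT.tau y) := by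
  set c := g (hT.tau y) with hc
  have h2 : hT.Q (g - c • 1) = hT.Q g - c • hT.bmap := by
    have hs := hT.Q_add (g - c • 1) (c • 1)
    rw [show g - c • 1 + c • 1 = g by abel, hT.Q_smul, hT.Q_one_eq] at hs
    rw [hs]; abel
  have h1 := hT.Q_abs_le (g - c • 1) y
  rw [h2] at h1
  have h3 : (g - c • 1) (hT.tau y) = 0 := by
    simp only [ContinuousMap.sub_apply, ContinuousMap.smul_apply, smul_eq_mul,
      ContinuousMap.one_apply, mul_one, ← hc, sub_self]
  rw [h3] at h1
  simp only [ContinuousMap.sub_apply, ContinuousMap.smul_apply, smul_eq_mul,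
    ContinuousMap.one_apply, abs_zero] at h1
  have h4 : hT.Q g y - c * hT.bmap y = 0 := abs_nonpos_iff.mp h1
  have hβ2 : hT.bmap y ^ 2 = 1 := hT.bsq y
  nlinarith [h4, hβ2]

end Good
end tau
section final
variable {X Y : Type*} [TopologicalSpace X] [CompactSpace X] [T2Space X]
  [TopologicalSpace Y] [CompactSpace Y] [T2Space Y]

theorem stmt16 (S : C(X, ℂ) → C(Y, ℂ)) (hsurj : Function.Surjective S)
    (hadd : ∀ f g : C(X, ℂ), S (f + g) = S f + S g)
    (hsmul : ∀ (c : ℝ) (f : C(X, ℂ)), S (c • f) = c • S f)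
    (hiso : ∀ f : C(X, ℂ), ‖S f‖ = ‖f‖)
    (hone : S 1 = 1) :
    ∃ (τ : Y ≃ₜ X) (K : Set Y), IsClopen K ∧
      ∀ (f : C(X, ℂ)) (y : Y),
        (y ∈ K → S f y = f (τ y)) ∧
        (y ∉ K → S f y = star (f (τ y))) := by
  have hS : Good S := ⟨hsurj, hadd, hsmul, hiso, hone⟩
  refine ⟨hS.tauHomeo, {y | hS.bmap y = 1}, ⟨?_, ?_⟩, ?_⟩
  · have heq : {y | hS.bmap y = 1} = hS.bmap ⁻¹' {1} := rfl
    rw [heq]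
    exact (isClosed_singleton).preimage hS.bmap.continuous
  · have hset : {y | hS.bmap y = 1} = {y | (0:ℝ) < hS.bmap y} := by
      ext y
      simp only [Set.mem_setOf_eq]
      constructor
      · intro h; rw [h]; norm_num
      · intro h
        rcases (abs_eq (by norm_num : (0:ℝ) ≤ 1)).mp (hS.babs y) with h1 | h1
        · exact h1
        · rw [h1] at h; linarith
    rw [hset]
    exact isOpen_lt continuous_const hS.bmap.continuous
  · intro f y
    have hdec : S f y = ((hS.R (CMre f) y : ℝ) : ℂ)
        + Complex.I * ((hS.Q (CMim f) y : ℝ) : ℂ) := by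
      have hfd : f = CMofR (CMre f) + Complex.I • CMofR (CMim f) := by
        ext x
        apply Complex.ext <;> simp [smul_eq_mul]
      calc S f y = S (CMofR (CMre f) + Complex.I • CMofR (CMim f)) y := by rw [← hfd]
      _ = (CMofR (hS.R (CMre f)) + Complex.I • CMofR (hS.Q (CMim f))) y := by
            rw [hadd, hS.R_spec, hS.Q_spec]
      _ = _ := by simp [smul_eq_mul]
    have hR : hS.R (CMre f) y = (f (hS.tau y)).re := by rw [hS.tau_spec]; simp
    have hQ : hS.Q (CMim f) y = hS.bmap y * (f (hS.tau y)).im := by rw [hS.Q_eq]; simp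
    have htau : hS.tauHomeo y = hS.tau y := rfl
    constructor
    · intro hy
      have hb : hS.bmap y = 1 := hy
      rw [hdec, hR, hQ, hb, htau]
      apply Complex.ext <;> simp
    · intro hy
      have hb : hS.bmap y = -1 := by
        rcases (abs_eq (by norm_num : (0:ℝ) ≤ 1)).mp (hS.babs y) with h1 | h1
        · exact absurd h1 hy
        · exact h1
      rw [hdec, hR, hQ, hb, htau]
      apply Complex.ext <;> simp
end final
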